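/- One-step unbiasedness of the branching estimator for a polynomial in expectations (PDE1 case): let τ ~ Exp(λ) independent of X, let F(x) = Σ_{k=0}^M a_k x^k, and define the estimator: if τ ≥ T output ψ(X_T); if τ < T, draw K with P(K = k) = p_k (p_k > 0 whenever a_k ≠ 0), run K independent copies of X from (τ, X_τ) to T, and output (a_K/p_K) ∏_{j=1}^K ψ(X_T^{(j)}). Then the expectation of this estimator equals E[1_{τ≥T} ψ(X_T)] + E[1_{τ<T} F(E_{τ,X_τ}[ψ(X_T)])]. -/

import Mathlib

open MeasureTheory

lemma aux_pi_pow {E : Type*} [MeasurableSpace E] (m : Measure E) [SigmaFinite m]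
    (k : ℕ) (ψ : E → ℝ) :
    ∫ z : Fin k → E, ∏ j, ψ (z j) ∂(Measure.pi fun _ => m) = (∫ y, ψ y ∂m) ^ k := by
  letI : MeasureSpace E := ⟨m⟩
  haveI : SigmaFinite (volume : Measure E) := ‹_›
  simpa using (integral_fintype_prod_eq_pow ψ :
    ∫ z : Fin k → E, ∏ j, ψ (z j) ∂(Measure.pi fun _ => m) = _)

/-- One-step unbiasedness of the branching estimator (PDE1 case): with `τ` the default
time, `ν t y` the law of `X_T` given `X_t = y`, and the estimator that outputs
`ψ(X_T)` if `τ ≥ T` and otherwise draws `K = k` with probability `p_k` and outputs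
`(a_K/p_K) ∏_{j=1}^K ψ(X_T^{(j)})` with i.i.d. copies, the expectation of the estimator
equals `E[1_{τ≥T} ψ(X_T)] + E[1_{τ<T} F(E_{τ,X_τ}[ψ(X_T)])]` where `F(m) = ∑ a_k m^k`. -/
theorem stmt_19 {Ω E : Type*} [MeasurableSpace Ω] [MeasurableSpace E]
    (μ : Measure Ω) [IsProbabilityMeasure μ]
    (M : ℕ) (T : ℝ) (a p : Fin (M + 1) → ℝ)
    (hp : ∀ k, 0 ≤ p k) (hp1 : ∑ k, p k = 1) (hpa : ∀ k, a k ≠ 0 → 0 < p k)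
    (τ : Ω → ℝ) (XT Xτ : Ω → E)
    (ν : ℝ → E → Measure E) (hν : ∀ t y, IsProbabilityMeasure (ν t y))
    [inst : ∀ t y, SigmaFinite (ν t y)]
    (ψ : E → ℝ) (hψmeas : Measurable ψ) (Cψ : ℝ) (hψ : ∀ y, |ψ y| ≤ Cψ)
    (hInt0 : Integrable (fun ω => if T ≤ τ ω then ψ (XT ω)
      else ∑ k, p k * ((a k / p k) *
        ∫ z : Fin (k : ℕ) → E, ∏ j, ψ (z j)
          ∂(Measure.pi fun _ => ν (τ ω) (Xτ ω)))) μ)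
    (hInt1 : Integrable (fun ω => if T ≤ τ ω then ψ (XT ω) else 0) μ)
    (hInt2 : Integrable (fun ω => if τ ω < T then
        ∑ k, a k * (∫ y, ψ y ∂(ν (τ ω) (Xτ ω))) ^ (k : ℕ) else 0) μ) :
    ∫ ω, (if T ≤ τ ω then ψ (XT ω)
        else ∑ k, p k * ((a k / p k) *
          ∫ z : Fin (k : ℕ) → E, ∏ j, ψ (z j)
            ∂(Measure.pi fun _ => ν (τ ω) (Xτ ω)))) ∂μ
      = (∫ ω, (if T ≤ τ ω then ψ (XT ω) else 0) ∂μ)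
        + ∫ ω, (if τ ω < T then
            ∑ k, a k * (∫ y, ψ y ∂(ν (τ ω) (Xτ ω))) ^ (k : ℕ) else 0) ∂μ := by
  rw [← integral_add hInt1 hInt2]
  apply integral_congr_ae
  filter_upwards with ω
  by_cases h : T ≤ τ ω
  · simp [h, not_lt.mpr h]
  · rw [if_neg h, if_neg h, if_pos (not_le.mp h), zero_add]
    refine Finset.sum_congr rfl fun k _ => ?_
    rw [aux_pi_pow]
    by_cases ha : a k = 0
    · simp [ha]
    · have hpk := (hpa k ha).ne'
      field_simp
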